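/- arXiv:0811.0898 — 2 statements merged into one kernel-verified Lean document; each statement's English description precedes it below -/
import Mathlib

section
/- Let A ⊆ (Z_2)^N be an affine subspace, l : (Z_2)^N → Z_2 linear, and q : (Z_2)^N → Z_2 quadratic. Consider the state |ψ⟩ ∝ Σ_{x∈A} i^{l(x)} (-1)^{q(x)} |x⟩. Then applying the single-qubit PHASE gate P = diag(1, i) to the first qubit yields a state of the same form: there exist a linear l' and quadratic q' on (Z_2)^N such that P_1|ψ⟩ ∝ Σ_{x∈A} i^{l'(x)} (-1)^{q'(x)} |x⟩. Specifically one may take l'(x) = l(x) + x_1 (mod 2) and q'(x) = q(x) + l(x)·x_1 (mod 2). -/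
/-- A linear function on `(Z_2)^K`. -/
def IsLinear {K : ℕ} (l : (Fin K → ZMod 2) → ZMod 2) : Prop :=
  ∃ d : Fin K → ZMod 2, ∀ x, l x = ∑ i, d i * x i

/-- A quadratic function on `(Z_2)^K`. -/
def IsQuadratic {K : ℕ} (q : (Fin K → ZMod 2) → ZMod 2) : Prop :=
  ∃ (c : Fin K → Fin K → ZMod 2) (d : Fin K → ZMod 2),
    ∀ x, q x = (∑ i, ∑ j, c i j * x i * x j) + ∑ i, d i * x i

lemma key_arith (a b c : ZMod 2) :
    Complex.I ^ (b.val) * (Complex.I ^ (a.val) * (-1 : ℂ) ^ (c.val)) =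
      Complex.I ^ ((a + b).val) * (-1 : ℂ) ^ ((c + a * b).val) := by
  have h2 : ∀ t : ZMod 2, t = 0 ∨ t = 1 := by decide
  rcases h2 a with rfl | rfl <;> rcases h2 b with rfl | rfl <;> rcases h2 c with rfl | rfl <;>
    simp [pow_succ, show (1:ZMod 2)+1 = 0 from rfl, show ZMod.val (1:ZMod 2) = 1 from rfl] <;> ring

/-- Applying the PHASE gate `P = diag(1, i)` to the first qubit of
`|ψ⟩ ∝ Σ_{x∈A} i^{l(x)} (-1)^{q(x)} |x⟩` yields a state of the same form,
with `l'(x) = l(x) + x_1` and `q'(x) = q(x) + l(x)·x_1` (mod 2). -/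
theorem phase_gate_preserves_form (N : ℕ)
    (A : Set (Fin (N + 1) → ZMod 2))
    (l q : (Fin (N + 1) → ZMod 2) → ZMod 2)
    (hl : IsLinear l) (hq : IsQuadratic q)
    (ψ : (Fin (N + 1) → ZMod 2) → ℂ)
    (hψ : ψ = A.indicator fun x => Complex.I ^ (l x).val * (-1 : ℂ) ^ (q x).val) :
    ∃ l' q' : (Fin (N + 1) → ZMod 2) → ZMod 2,
      IsLinear l' ∧ IsQuadratic q' ∧
      (∀ x, l' x = l x + x 0) ∧ (∀ x, q' x = q x + l x * x 0) ∧
      ∃ c : ℂ, c ≠ 0 ∧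
        (Matrix.diagonal fun x : Fin (N + 1) → ZMod 2 =>
            Complex.I ^ (x 0).val).mulVec ψ =
          c • A.indicator fun x => Complex.I ^ (l' x).val * (-1 : ℂ) ^ (q' x).val := by
  obtain ⟨dl, hdl⟩ := hl
  obtain ⟨cq, dq, hcq⟩ := hq
  refine ⟨fun x => l x + x 0, fun x => q x + l x * x 0, ?_, ?_,
    fun _ => rfl, fun _ => rfl, 1, one_ne_zero, ?_⟩
  · refine ⟨fun i => dl i + (if i = 0 then 1 else 0), fun x => ?_⟩
    simp only [add_mul, Finset.sum_add_distrib, hdl]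
    congr 1
    rw [Finset.sum_eq_single 0] <;> simp +contextual
  · refine ⟨fun i j => cq i j + (if j = 0 then dl i else 0), dq, fun x => ?_⟩
    have : ∀ i : Fin (N + 1),
        (∑ j, (cq i j + (if j = 0 then dl i else 0)) * x i * x j)
          = (∑ j, cq i j * x i * x j) + dl i * x i * x 0 := by
      intro i
      simp only [add_mul, Finset.sum_add_distrib]
      congr 1
      rw [Finset.sum_eq_single 0] <;> simp +contextual [mul_comm]
    simp only [this, Finset.sum_add_distrib]
    rw [hcq, hdl, Finset.sum_mul]
    ring
  · funext x
    rw [Matrix.mulVec_diagonal, hψ]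
    by_cases hx : x ∈ A
    · simp only [Set.indicator_of_mem hx, one_smul, Pi.smul_apply, smul_eq_mul, one_mul]
      exact key_arith (l x) (x 0) (q x)
    · simp [Set.indicator_of_notMem hx]
end

section
/- Let A = {Ru + t} ⊆ (Z_2)^N be an affine subspace, l linear and q quadratic on (Z_2)^N, and |ψ⟩ ∝ Σ_{x∈A} i^{l(x)} (-1)^{q(x)} |x⟩. Applying a CNOT gate to qubits 1 (control) and 2 (target) yields CNOT_{1,2}|ψ⟩ ∝ Σ_{x∈A'} i^{l'(x)} (-1)^{q'(x)} |x⟩ where A' = L(A) is the image of A under the invertible linear map L : (Z_2)^N → (Z_2)^N sending (x_1, x_2, x_3, ..., x_N) to (x_1, x_1 + x_2, x_3, ..., x_N), l' = l ∘ L^{-1}, and q' = q ∘ L^{-1}. In particular A' is again an affine subspace, l' is linear on A', and q' is quadratic. -/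
/-- The invertible linear map `(x_1, x_2, x_3, ...) ↦ (x_1, x_1 + x_2, x_3, ...)`
on `(Z_2)^{N+2}` implemented by CNOT on qubits 0 (control) and 1 (target);
over `Z_2` it is its own inverse. -/
def Lmap (N : ℕ) : (Fin (N + 2) → ZMod 2) → (Fin (N + 2) → ZMod 2) :=
  fun x => Function.update x 1 (x 0 + x 1)

/-- The CNOT gate on qubits 0 and 1, as a permutation matrix on basis states. -/
def CNOTgate (N : ℕ) :
    Matrix (Fin (N + 2) → ZMod 2) (Fin (N + 2) → ZMod 2) ℂ :=
  Matrix.of fun y z => if y = Lmap N z then 1 else 0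

-- matrix of Lmap
def Mmat (N : ℕ) : Matrix (Fin (N + 2)) (Fin (N + 2)) (ZMod 2) :=
  Matrix.of fun i j => if j = i then 1 else if i = 1 ∧ j = 0 then 1 else 0

lemma zero_ne_one_fin (N : ℕ) : (0 : Fin (N + 2)) ≠ 1 := by
  intro h
  have := congrArg Fin.val h
  simp [Fin.val_zero, Fin.val_one] at this

lemma Lmap_eq_mulVec (N : ℕ) (x : Fin (N + 2) → ZMod 2) :
    Lmap N x = (Mmat N).mulVec x := by
  funext i
  by_cases hi : i = 1
  · subst hi
    have h01 : (0 : Fin (N+2)) ≠ 1 := zero_ne_one_fin N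
    simp only [Lmap, Function.update_self, Matrix.mulVec, dotProduct, Mmat,
      Matrix.of_apply, true_and]
    have : ∀ j : Fin (N+2),
        (if j = 1 then (1:ZMod 2) else if j = 0 then 1 else 0) * x j
          = (if j = 1 then x j else 0) + (if j = 0 then x j else 0) := by
      intro j
      by_cases h1 : j = 1
      · subst h1; simp [h01.symm]
      · by_cases h0 : j = 0 <;> simp [h1, h0]
    rw [Finset.sum_congr rfl fun j _ => this j, Finset.sum_add_distrib,
      Finset.sum_ite_eq' , Finset.sum_ite_eq']
    simp [add_comm]
  · simp only [Lmap, Function.update_of_ne hi, Matrix.mulVec, dotProduct, Mmat,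
      Matrix.of_apply]
    have : ∀ j : Fin (N+2),
        (if j = i then (1:ZMod 2) else if i = 1 ∧ j = 0 then 1 else 0) * x j
          = (if j = i then x j else 0) := by
      intro j
      by_cases h1 : j = i
      · simp [h1]
      · simp [h1, hi]
    rw [Finset.sum_congr rfl fun j _ => this j, Finset.sum_ite_eq']
    simp

lemma Lmap_invol (N : ℕ) (x : Fin (N + 2) → ZMod 2) : Lmap N (Lmap N x) = x := by
  funext i
  by_cases hi : i = 1
  · subst hi
    have h01 : (0 : Fin (N+2)) ≠ 1 := zero_ne_one_fin N
    simp only [Lmap, Function.update_self, Function.update_of_ne h01]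
    rw [← add_assoc, CharTwo.add_self_eq_zero, zero_add]
  · simp [Lmap, Function.update_of_ne hi]

lemma Lmap_add (N : ℕ) (a b : Fin (N + 2) → ZMod 2) :
    Lmap N (a + b) = Lmap N a + Lmap N b := by
  rw [Lmap_eq_mulVec, Lmap_eq_mulVec, Lmap_eq_mulVec, Matrix.mulVec_add]

lemma sum_swap4 {α : Type*} [AddCommMonoid α] {n : ℕ}
    (g : Fin n → Fin n → Fin n → Fin n → α) :
    ∑ k, ∑ l, ∑ i, ∑ j, g i j k l = ∑ i, ∑ j, ∑ k, ∑ l, g i j k l := by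
  calc ∑ k, ∑ l, ∑ i, ∑ j, g i j k l
      = ∑ k, ∑ i, ∑ l, ∑ j, g i j k l :=
        Finset.sum_congr rfl fun k _ => Finset.sum_comm
    _ = ∑ i, ∑ k, ∑ l, ∑ j, g i j k l := Finset.sum_comm
    _ = ∑ i, ∑ k, ∑ j, ∑ l, g i j k l :=
        Finset.sum_congr rfl fun i _ =>
          Finset.sum_congr rfl fun k _ => Finset.sum_comm
    _ = ∑ i, ∑ j, ∑ k, ∑ l, g i j k l :=
        Finset.sum_congr rfl fun i _ => Finset.sum_comm

lemma isLinear_comp {K : ℕ} (l : (Fin K → ZMod 2) → ZMod 2) (hl : IsLinear l)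
    (M : Matrix (Fin K) (Fin K) (ZMod 2)) : IsLinear (fun x => l (M.mulVec x)) := by
  obtain ⟨d, hd⟩ := hl
  refine ⟨Matrix.vecMul d M, fun x => ?_⟩
  have := Matrix.dotProduct_mulVec d M x
  simp only [hd]
  simpa [dotProduct] using this

lemma isQuadratic_comp {K : ℕ} (q : (Fin K → ZMod 2) → ZMod 2) (hq : IsQuadratic q)
    (M : Matrix (Fin K) (Fin K) (ZMod 2)) : IsQuadratic (fun x => q (M.mulVec x)) := by
  obtain ⟨c, d, h⟩ := hq
  refine ⟨fun k l' => ∑ i, ∑ j, c i j * M i k * M j l', Matrix.vecMul d M, fun x => ?_⟩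
  simp only [h]
  congr 1
  · -- quadratic part
    have expand : ∑ k, ∑ l', (∑ i, ∑ j, c i j * M i k * M j l') * x k * x l'
        = ∑ k, ∑ l', ∑ i, ∑ j, c i j * M i k * M j l' * x k * x l' := by
      simp [Finset.sum_mul]
    rw [expand, sum_swap4]
    refine Finset.sum_congr rfl fun i _ => Finset.sum_congr rfl fun j _ => ?_
    conv_rhs => rw [Finset.sum_comm]
    simp only [Matrix.mulVec, dotProduct, Finset.mul_sum, Finset.sum_mul]
    refine Finset.sum_congr rfl fun k _ => Finset.sum_congr rfl fun l' _ => by ring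
  · have := Matrix.dotProduct_mulVec d M x
    simpa [dotProduct] using this

lemma Lmap_mem_image (N : ℕ) (A : Set (Fin (N + 2) → ZMod 2)) (y : Fin (N + 2) → ZMod 2) :
    y ∈ Lmap N '' A ↔ Lmap N y ∈ A := by
  constructor
  · rintro ⟨a, ha, rfl⟩; rwa [Lmap_invol]
  · intro h; exact ⟨Lmap N y, h, Lmap_invol N y⟩

/-- Applying CNOT on qubits 1 (control) and 2 (target) to
`|ψ⟩ ∝ Σ_{x∈A} i^{l(x)} (-1)^{q(x)} |x⟩` with `A = {Ru + t}` affine yields a state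
of the same form with `A' = L(A)` (again affine), `l' = l ∘ L⁻¹` (linear) and
`q' = q ∘ L⁻¹` (quadratic); over `Z_2`, `L⁻¹ = L`. -/
theorem cnot_preserves_form (N m : ℕ)
    (R : Matrix (Fin (N + 2)) (Fin m) (ZMod 2)) (t : Fin (N + 2) → ZMod 2)
    (A : Set (Fin (N + 2) → ZMod 2))
    (hA : A = {x | ∃ u, x = R.mulVec u + t})
    (l q : (Fin (N + 2) → ZMod 2) → ZMod 2)
    (hl : IsLinear l) (hq : IsQuadratic q)
    (ψ : (Fin (N + 2) → ZMod 2) → ℂ)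
    (hψ : ψ = A.indicator fun x => Complex.I ^ (l x).val * (-1 : ℂ) ^ (q x).val) :
    (∃ (m' : ℕ) (R' : Matrix (Fin (N + 2)) (Fin m') (ZMod 2))
        (t' : Fin (N + 2) → ZMod 2),
        Lmap N '' A = {x | ∃ u, x = R'.mulVec u + t'}) ∧
    IsLinear (l ∘ Lmap N) ∧ IsQuadratic (q ∘ Lmap N) ∧
    ∃ c : ℂ, c ≠ 0 ∧
      (CNOTgate N).mulVec ψ =
        c • (Lmap N '' A).indicator
          (fun x => Complex.I ^ (l (Lmap N x)).val * (-1 : ℂ) ^ (q (Lmap N x)).val) := by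
  have hLm : ∀ v, Lmap N (R.mulVec v + t) = (Mmat N * R).mulVec v + Lmap N t := by
    intro v
    rw [Lmap_add, Lmap_eq_mulVec N (R.mulVec v), Matrix.mulVec_mulVec]
  refine ⟨⟨m, Mmat N * R, Lmap N t, ?_⟩, ?_, ?_, 1, one_ne_zero, ?_⟩
  · ext x
    simp only [Set.mem_setOf_eq, Lmap_mem_image]
    constructor
    · intro hx
      rw [hA] at hx
      obtain ⟨u, hu⟩ := hx
      refine ⟨u, ?_⟩
      have : x = Lmap N (Lmap N x) := (Lmap_invol N x).symm
      rw [this, hu, hLm]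
    · rintro ⟨u, rfl⟩
      rw [← hLm, Lmap_invol, hA]
      exact ⟨u, rfl⟩
  · have := isLinear_comp l hl (Mmat N)
    obtain ⟨d, hd⟩ := this
    exact ⟨d, fun x => by rw [Function.comp_apply, Lmap_eq_mulVec]; exact hd x⟩
  · have := isQuadratic_comp q hq (Mmat N)
    obtain ⟨c, d, hd⟩ := this
    exact ⟨c, d, fun x => by rw [Function.comp_apply, Lmap_eq_mulVec]; exact hd x⟩
  · rw [one_smul]
    funext y
    have hmv : (CNOTgate N).mulVec ψ y = ψ (Lmap N y) := by
      simp only [Matrix.mulVec, dotProduct, CNOTgate, Matrix.of_apply]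
      calc ∑ z, (if y = Lmap N z then (1:ℂ) else 0) * ψ z
          = ∑ z, if z = Lmap N y then ψ z else 0 := by
            refine Finset.sum_congr rfl fun z _ => ?_
            by_cases h : z = Lmap N y
            · subst h
              have : y = Lmap N (Lmap N y) := (Lmap_invol N y).symm
              simp [← this]
            · have hy : y ≠ Lmap N z := fun hy => h (by rw [hy, Lmap_invol])
              simp [h, hy]
        _ = ψ (Lmap N y) := by rw [Finset.sum_ite_eq']; simp
    rw [hmv, hψ]
    by_cases hy : Lmap N y ∈ A
    · rw [Set.indicator_of_mem hy, Set.indicator_of_mem ((Lmap_mem_image N A y).mpr hy)]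
    · rw [Set.indicator_of_notMem hy,
        Set.indicator_of_notMem (fun h => hy ((Lmap_mem_image N A y).mp h))]
end
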